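/- arXiv:1302.1978 — 2 statements merged into one kernel-verified Lean document; each statement's English description precedes it below -/
import Mathlib

section
/- (Minty) Let H be a real Hilbert space and A : H ⇉ H a monotone operator. Then A is maximally monotone if and only if ran(A + Id) = H. -/
noncomputable section
open scoped RealInnerProductSpace

variable {H : Type*} [NormedAddCommGroup H] [InnerProductSpace ℝ H] [CompleteSpace H]

lemma sum_w_norm_sub_sq {ι : Type*} (t : Finset ι) (w : ι → ℝ) (x : ι → H) (u : H) :
    ∑ i ∈ t, w i * ‖x i - u‖^2
      = ∑ i ∈ t, w i * ‖x i‖^2 - 2 * ⟪∑ i ∈ t, w i • x i, u⟫ + (∑ i ∈ t, w i) * ‖u‖^2 := by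
  rw [sum_inner, Finset.sum_mul, Finset.mul_sum, ← Finset.sum_sub_distrib,
    ← Finset.sum_add_distrib]
  refine Finset.sum_congr rfl fun i _ => ?_
  rw [real_inner_smul_left, @norm_sub_sq_real]
  ring

lemma sum_w_norm_sub_bary {ι : Type*} (t : Finset ι) (w : ι → ℝ) (x : ι → H)
    (hw : ∑ i ∈ t, w i = 1) :
    ∑ i ∈ t, w i * ‖x i - (∑ i ∈ t, w i • x i)‖^2
      = ∑ i ∈ t, w i * ‖x i‖^2 - ‖∑ i ∈ t, w i • x i‖^2 := by
  rw [sum_w_norm_sub_sq, hw, real_inner_self_eq_norm_sq]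
  ring

lemma double_sum_norm_sub_sq {ι : Type*} (t : Finset ι) (w : ι → ℝ) (x : ι → H)
    (hw : ∑ i ∈ t, w i = 1) :
    ∑ i ∈ t, ∑ j ∈ t, w i * (w j * ‖x i - x j‖^2)
      = 2 * (∑ i ∈ t, w i * ‖x i‖^2 - ‖∑ i ∈ t, w i • x i‖^2) := by
  set u := ∑ i ∈ t, w i • x i with hu
  have h1 : ∀ i ∈ t, ∑ j ∈ t, w j * ‖x j - x i‖^2
      = ∑ j ∈ t, w j * ‖x j‖^2 - 2 * ⟪u, x i⟫ + ‖x i‖^2 := by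
    intro i _
    rw [sum_w_norm_sub_sq t w x (x i), hw, one_mul]
  calc ∑ i ∈ t, ∑ j ∈ t, w i * (w j * ‖x i - x j‖^2)
      = ∑ i ∈ t, w i * (∑ j ∈ t, w j * ‖x j - x i‖^2) := by
        refine Finset.sum_congr rfl fun i _ => ?_
        rw [Finset.mul_sum]
        refine Finset.sum_congr rfl fun j _ => ?_
        rw [norm_sub_rev]
    _ = ∑ i ∈ t, w i * (∑ j ∈ t, w j * ‖x j‖^2 - 2 * ⟪u, x i⟫ + ‖x i‖^2) := by
        refine Finset.sum_congr rfl fun i hi => ?_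
        rw [h1 i hi]
    _ = (∑ i ∈ t, w i) * (∑ j ∈ t, w j * ‖x j‖^2)
          - 2 * (∑ i ∈ t, w i * ⟪u, x i⟫) + ∑ i ∈ t, w i * ‖x i‖^2 := by
        rw [Finset.sum_mul, Finset.mul_sum, ← Finset.sum_sub_distrib, ← Finset.sum_add_distrib]
        refine Finset.sum_congr rfl fun i _ => ?_
        ring
    _ = 2 * (∑ i ∈ t, w i * ‖x i‖^2 - ‖u‖^2) := by
        have : ∑ i ∈ t, w i * ⟪u, x i⟫ = ‖u‖^2 := by
          rw [← real_inner_self_eq_norm_sq, hu]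
          rw [sum_inner]
          refine Finset.sum_congr rfl fun i _ => ?_
          rw [real_inner_smul_left, real_inner_comm]
        rw [this, hw]
        ring

/-- Averaged Kirszbraun inequality: at the barycenter, the average constraint violation
is nonpositive. -/
lemma averaged_ineq {ι : Type*} (t : Finset ι) (w : ι → ℝ) (p q : ι → H)
    (hw0 : ∀ i ∈ t, 0 ≤ w i) (hw : ∑ i ∈ t, w i = 1)
    (hpq : ∀ i ∈ t, ∀ j ∈ t, ‖q i - q j‖ ≤ ‖p i - p j‖) :
    ∑ i ∈ t, w i * (‖(∑ j ∈ t, w j • q j) - q i‖^2 - ‖p i‖^2) ≤ 0 := by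
  set u := ∑ j ∈ t, w j • q j with hu
  set v := ∑ j ∈ t, w j • p j with hv
  have hq : ∑ i ∈ t, w i * ‖q i - u‖^2 = ∑ i ∈ t, w i * ‖q i‖^2 - ‖u‖^2 :=
    sum_w_norm_sub_bary t w q hw
  have hp : ∑ i ∈ t, w i * ‖p i - v‖^2 = ∑ i ∈ t, w i * ‖p i‖^2 - ‖v‖^2 :=
    sum_w_norm_sub_bary t w p hw
  have hdq := double_sum_norm_sub_sq t w q hw
  have hdp := double_sum_norm_sub_sq t w p hw
  have hle : ∑ i ∈ t, ∑ j ∈ t, w i * (w j * ‖q i - q j‖^2)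
      ≤ ∑ i ∈ t, ∑ j ∈ t, w i * (w j * ‖p i - p j‖^2) := by
    refine Finset.sum_le_sum fun i hi => Finset.sum_le_sum fun j hj => ?_
    have h1 := hpq i hi j hj
    have h2 : ‖q i - q j‖^2 ≤ ‖p i - p j‖^2 := by
      apply sq_le_sq' _ h1
      have := norm_nonneg (q i - q j)
      linarith [norm_nonneg (p i - p j)]
    have := mul_le_mul_of_nonneg_left h2 (hw0 j hj)
    exact mul_le_mul_of_nonneg_left this (hw0 i hi)
  have key : ∑ i ∈ t, w i * ‖q i - u‖^2 ≤ ∑ i ∈ t, w i * ‖p i - v‖^2 := by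
    nlinarith [hdq, hdp, hle]
  have hvnn : (0:ℝ) ≤ ‖v‖^2 := sq_nonneg _
  have : ∑ i ∈ t, w i * (‖u - q i‖^2 - ‖p i‖^2)
      = ∑ i ∈ t, w i * ‖q i - u‖^2 - ∑ i ∈ t, w i * ‖p i‖^2 := by
    rw [← Finset.sum_sub_distrib]
    refine Finset.sum_congr rfl fun i _ => ?_
    rw [norm_sub_rev]
    ring
  rw [this]
  nlinarith [hp, hq]

/-- Finite one-point Kirszbraun: the balls `B(q i, ‖p i‖)`, `i ∈ s`, have a common point. -/
lemma finite_kirszbraun {ι : Type*} (p q : ι → H)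
    (hpq : ∀ i j, ‖q i - q j‖ ≤ ‖p i - p j‖) (s : Finset ι) (hs : s.Nonempty) :
    ∃ u : H, ∀ i ∈ s, ‖u - q i‖^2 ≤ ‖p i‖^2 := by
  classical
  set K := convexHull ℝ (q '' ↑s) with hK
  have hKcomp : IsCompact K := (s.finite_toSet.image q).isCompact_convexHull ℝ
  have hKconv : Convex ℝ K := convex_convexHull ℝ _
  have hKne : K.Nonempty := by
    obtain ⟨i0, hi0⟩ := hs
    exact ⟨q i0, subset_convexHull ℝ _ ⟨i0, hi0, rfl⟩⟩
  set f : ι → H → ℝ := fun i u => ‖u - q i‖^2 - ‖p i‖^2 with hf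
  have hfc : ∀ i ∈ s, Continuous (f i) := by
    intro i _
    exact ((continuous_id.sub continuous_const).norm.pow 2).sub continuous_const
  set c : H → ℝ := fun u => s.sup' hs (fun i => f i u) with hc
  have hcc : Continuous c := Continuous.finset_sup'_apply hs hfc
  obtain ⟨u0, hu0K, hmin⟩ := hKcomp.exists_isMinOn hKne hcc.continuousOn
  -- active index set
  set T : Finset ι := s.filter (fun i => f i u0 = c u0) with hT
  have hTs : T ⊆ s := Finset.filter_subset _ _
  have hTne : T.Nonempty := by
    obtain ⟨i0, hi0, heq⟩ := Finset.exists_mem_eq_sup' hs (fun i => f i u0)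
    exact ⟨i0, Finset.mem_filter.2 ⟨hi0, heq.symm⟩⟩
  set C := convexHull ℝ (q '' ↑T) with hC
  have hCcomp : IsCompact C := (T.finite_toSet.image q).isCompact_convexHull ℝ
  have hCconv : Convex ℝ C := convex_convexHull ℝ _
  have hCK : C ⊆ K := convexHull_mono (Set.image_mono (f := q) hTs)
  have hCne : C.Nonempty := by
    obtain ⟨i0, hi0⟩ := hTne
    exact ⟨q i0, subset_convexHull ℝ _ ⟨i0, hi0, rfl⟩⟩
  -- the minimizer lies in the convex hull of the active points
  have hu0C : u0 ∈ C := by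
    by_contra hnot
    obtain ⟨P, hPC, hPproj⟩ :=
      exists_norm_eq_iInf_of_complete_convex hCne hCcomp.isComplete hCconv u0
    have hvar : ∀ w ∈ C, ⟪u0 - P, w - P⟫ ≤ 0 :=
      (norm_eq_iInf_iff_real_inner_le_zero hCconv hPC).1 hPproj
    set d : H := P - u0 with hd
    have hdne : d ≠ 0 := by
      intro h
      apply hnot
      have : P = u0 := by
        have := sub_eq_zero.1 h
        exact this
      rwa [← this]
    have hdpos : (0:ℝ) < ‖d‖^2 := by
      have := norm_pos_iff.2 hdne
      positivity
    -- choose step size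
    set R : ι → ℝ := fun i => |2 * ⟪u0 - q i, d⟫ + ‖d‖^2| with hR
    set t : ℝ :=
      if h : (s \ T).Nonempty then
        min 1 ((s \ T).inf' h (fun i => (c u0 - f i u0) / (R i + 1)))
      else 1 with ht
    have hgap : ∀ i ∈ s \ T, 0 < c u0 - f i u0 := by
      intro i hi
      obtain ⟨his, hiT⟩ := Finset.mem_sdiff.1 hi
      have hle : f i u0 ≤ c u0 := Finset.le_sup' (fun i => f i u0) his
      have hne2 : f i u0 ≠ c u0 := by
        intro h
        exact hiT (Finset.mem_filter.2 ⟨his, h⟩)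
      cases lt_or_eq_of_le hle with
      | inl h => linarith
      | inr h => exact absurd h hne2
    have ht0 : 0 < t := by
      rw [ht]
      split_ifs with h
      · refine lt_min one_pos ?_
        rw [Finset.lt_inf'_iff]
        intro i hi
        have h1 := hgap i hi
        have h2 : (0:ℝ) < R i + 1 := by positivity
        exact div_pos h1 h2
      · exact one_pos
    have ht1 : t ≤ 1 := by
      rw [ht]; split_ifs with h
      · exact min_le_left _ _
      · exact le_refl 1
    set u1 : H := u0 + t • d with hu1
    have hu1K : u1 ∈ K := by
      have : u1 = (1 - t) • u0 + t • P := by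
        rw [hu1, hd]
        module
      rw [this]
      exact hKconv hu0K (hCK hPC) (by linarith) (le_of_lt ht0) (by ring)
    have hstep : ∀ i, f i u1 = f i u0 + 2 * t * ⟪u0 - q i, d⟫ + t^2 * ‖d‖^2 := by
      intro i
      have : u1 - q i = (u0 - q i) + t • d := by rw [hu1]; abel
      rw [hf]
      simp only
      rw [this, @norm_add_sq_real, real_inner_smul_right, norm_smul, Real.norm_eq_abs,
        mul_pow, sq_abs]
      ring
    have hlt : ∀ i ∈ s, f i u1 < c u0 := by
      intro i his
      by_cases hiT : i ∈ T
      · -- active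
        have hqi : q i ∈ C := subset_convexHull ℝ _ ⟨i, hiT, rfl⟩
        have h1 : ⟪u0 - q i, d⟫ ≤ -‖d‖^2 := by
          have h2 : ⟪u0 - P, q i - P⟫ ≤ 0 := hvar _ hqi
          have h4 : ⟪u0 - P, d⟫ = -‖d‖^2 := by
            have he : u0 - P = -d := by rw [hd]; abel
            rw [he, inner_neg_left, real_inner_self_eq_norm_sq]
          have h5 : ⟪P - q i, d⟫ ≤ 0 := by
            have he : ⟪P - q i, d⟫ = ⟪u0 - P, q i - P⟫ := by
              rw [hd, show P - q i = -(q i - P) from by abel,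
                show P - u0 = -(u0 - P) from by abel, inner_neg_neg, real_inner_comm]
            rw [he]
            exact h2
          have h6 : ⟪u0 - q i, d⟫ = ⟪u0 - P, d⟫ + ⟪P - q i, d⟫ := by
            rw [← inner_add_left]
            congr 1
            abel
          linarith
        have hfi : f i u0 = c u0 := (Finset.mem_filter.1 hiT).2
        rw [hstep i, hfi]
        have e1 : t * ⟪u0 - q i, d⟫ ≤ t * (-‖d‖^2) := mul_le_mul_of_nonneg_left h1 ht0.le
        have e2 : t^2 * ‖d‖^2 ≤ t * ‖d‖^2 := by
          nlinarith [mul_nonneg (mul_nonneg (sub_nonneg.2 ht1) ht0.le) hdpos.le]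
        have e3 : 0 < t * ‖d‖^2 := mul_pos ht0 hdpos
        nlinarith [e1, e2, e3]
      · -- inactive
        have hisd : i ∈ s \ T := Finset.mem_sdiff.2 ⟨his, hiT⟩
        have hg := hgap i hisd
        have hRnn : 0 ≤ R i := abs_nonneg _
        have htle : t * (R i + 1) ≤ c u0 - f i u0 := by
          have h2 : t ≤ (c u0 - f i u0) / (R i + 1) := by
            rw [ht]
            split_ifs with h
            · exact le_trans (min_le_right _ _) (Finset.inf'_le _ hisd)
            · exact absurd ⟨i, hisd⟩ h
          have h3 : (0:ℝ) < R i + 1 := by positivity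
          calc t * (R i + 1) ≤ ((c u0 - f i u0) / (R i + 1)) * (R i + 1) := by
                exact mul_le_mul_of_nonneg_right h2 (le_of_lt h3)
            _ = c u0 - f i u0 := by field_simp
        have hkey : 2 * t * ⟪u0 - q i, d⟫ + t^2 * ‖d‖^2 ≤ t * R i := by
          have h1 : 2 * ⟪u0 - q i, d⟫ + ‖d‖^2 ≤ R i := le_abs_self _
          have h2 : t^2 * ‖d‖^2 ≤ t * ‖d‖^2 := by
            nlinarith [mul_nonneg (mul_nonneg (sub_nonneg.2 ht1) ht0.le) hdpos.le]
          have h3 : t * (2 * ⟪u0 - q i, d⟫ + ‖d‖^2) ≤ t * R i :=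
            mul_le_mul_of_nonneg_left h1 ht0.le
          nlinarith [h2, h3]
        rw [hstep i]
        have : t * R i < c u0 - f i u0 := by nlinarith [htle, ht0]
        linarith
    have : c u1 < c u0 := by
      rw [hc]
      simp only
      rw [Finset.sup'_lt_iff]
      exact hlt
    have := hmin hu1K
    simp only [Set.mem_setOf_eq] at this
    exact absurd this (not_le.2 (by simpa using ‹c u1 < c u0›))
  -- representation of u0 as a convex combination of active points
  have himg : (q '' ↑T : Set H) = ↑(T.image q) := (Finset.coe_image).symm
  rw [hC, himg, Finset.convexHull_eq] at hu0C
  obtain ⟨w, hw0, hw1, hwc⟩ := hu0C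
  rw [Finset.centerMass_eq_of_sum_1 _ _ hw1] at hwc
  -- pick a preimage for every active point
  have hpick : ∀ y ∈ T.image q, ∃ i ∈ T, q i = y := by
    intro y hy
    exact Finset.mem_image.1 hy
  choose pick hpickT hpickq using hpick
  set P' : H → H := fun y => if h : y ∈ T.image q then p (pick y h) else 0 with hP'
  have havg := averaged_ineq (T.image q) w P' (fun y => y) hw0 hw1 ?_
  · -- each active constraint value equals c u0, so c u0 ≤ 0
    have hbar : (∑ j ∈ T.image q, w j • j) = u0 := by
      rw [← hwc]
      simp [id]
    rw [hbar] at havg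
    have hterm : ∀ y ∈ T.image q, w y * (‖u0 - y‖^2 - ‖P' y‖^2) = w y * c u0 := by
      intro y hy
      congr 1
      have h1 : P' y = p (pick y hy) := by rw [hP']; simp [hy]
      have h2 : q (pick y hy) = y := hpickq y hy
      have h3 : pick y hy ∈ T := hpickT y hy
      have h4 : f (pick y hy) u0 = c u0 := (Finset.mem_filter.1 h3).2
      have h4' : ‖u0 - q (pick y hy)‖^2 - ‖p (pick y hy)‖^2 = c u0 := h4
      rw [h2] at h4'
      rw [h1, h4']
    rw [Finset.sum_congr rfl hterm, ← Finset.sum_mul, hw1, one_mul] at havg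
    refine ⟨u0, fun i his => ?_⟩
    have : f i u0 ≤ c u0 := Finset.le_sup' (fun i => f i u0) his
    have : f i u0 ≤ 0 := le_trans this havg
    have h5 : ‖u0 - q i‖^2 - ‖p i‖^2 ≤ 0 := this
    linarith
  · -- Lipschitz condition among active points
    intro y hy y' hy'
    have h1 : P' y = p (pick y hy) := by rw [hP']; simp [hy]
    have h2 : P' y' = p (pick y' hy') := by rw [hP']; simp [hy']
    have h3 := hpq (pick y hy) (pick y' hy')
    rw [hpickq y hy, hpickq y' hy'] at h3
    rw [h1, h2]
    exact h3

lemma lt_of_sq_lt_sq' (a b : ℝ) (ha : 0 ≤ a) (hb : 0 ≤ b) (h : a^2 < b^2) : a < b := by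
  nlinarith

set_option maxHeartbeats 1600000 in
/-- One-point Kirszbraun in a complete space: the balls `B(q i, ‖p i‖)` have a common point. -/
lemma kirszbraun_point {ι : Type*} [Nonempty ι] (p q : ι → H)
    (hpq : ∀ i j, ‖q i - q j‖ ≤ ‖p i - p j‖) :
    ∃ u : H, ∀ i, ‖u - q i‖ ≤ ‖p i‖ := by
  classical
  set S : Finset ι → Set H := fun F => {u | ∀ i ∈ F, ‖u - q i‖ ≤ ‖p i‖} with hS
  have hSeq : ∀ F : Finset ι, S F = ⋂ i ∈ F, Metric.closedBall (q i) ‖p i‖ := by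
    intro F
    ext u
    simp [hS, Metric.mem_closedBall, dist_eq_norm]
  have hSconv : ∀ F, Convex ℝ (S F) := by
    intro F
    rw [hSeq]
    exact convex_iInter fun i => convex_iInter fun _ => convex_closedBall _ _
  have hSclosed : ∀ F, IsClosed (S F) := by
    intro F
    rw [hSeq]
    exact isClosed_biInter fun i _ => Metric.isClosed_closedBall
  have hSne : ∀ F, (S F).Nonempty := by
    intro F
    rcases F.eq_empty_or_nonempty with h | h
    · exact ⟨0, by simp [hS, h]⟩
    · obtain ⟨u, hu⟩ := finite_kirszbraun p q hpq F h
      exact ⟨u, fun i hi => le_of_pow_le_pow_left₀ two_ne_zero (norm_nonneg _) (hu i hi)⟩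
  have hSmono : ∀ F G : Finset ι, F ⊆ G → S G ⊆ S F := by
    intro F G hFG u hu i hi
    exact hu i (hFG hi)
  -- minimal norm elements
  have hproj : ∀ F : Finset ι, ∃ v ∈ S F, ∀ w ∈ S F, ‖v‖ ≤ ‖w‖ := by
    intro F
    obtain ⟨v, hv, heq⟩ :=
      exists_norm_eq_iInf_of_complete_convex (hSne F) ((hSclosed F).isComplete)
        (hSconv F) 0
    refine ⟨v, hv, fun w hw => ?_⟩
    have hb : BddBelow (Set.range fun w : S F => ‖(0:H) - w‖) := by
      refine ⟨0, ?_⟩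
      rintro r ⟨z, rfl⟩
      exact norm_nonneg _
    have h1 : ‖(0:H) - v‖ ≤ ‖(0:H) - w‖ := by
      rw [heq]
      exact ciInf_le hb (⟨w, hw⟩ : S F)
    simpa using h1
  choose x hxS hxmin using hproj
  set i₀ : ι := Classical.arbitrary ι with hi₀
  set M : ℝ := ‖q i₀‖ + ‖p i₀‖ with hM
  have hM0 : 0 ≤ M := by positivity
  have hxM : ∀ F, ‖x F‖ ≤ M := by
    intro F
    have h2 : x (insert i₀ F) ∈ S F := hSmono _ _ (F.subset_insert i₀) (hxS _)
    have h1 : ‖x F‖ ≤ ‖x (insert i₀ F)‖ := hxmin F _ h2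
    have h3 : ‖x (insert i₀ F) - q i₀‖ ≤ ‖p i₀‖ :=
      hxS (insert i₀ F) i₀ (Finset.mem_insert_self _ _)
    have h4 : ‖x (insert i₀ F)‖ ≤ ‖q i₀‖ + ‖p i₀‖ := by
      have := norm_add_le (x (insert i₀ F) - q i₀) (q i₀)
      simp only [sub_add_cancel] at this
      linarith
    linarith
  set δ : ℝ := sSup (Set.range fun F => ‖x F‖) with hδ
  have hbdd : BddAbove (Set.range fun F => ‖x F‖) := by
    refine ⟨M, ?_⟩
    rintro r ⟨F, rfl⟩
    exact hxM F
  have hle : ∀ F, ‖x F‖ ≤ δ := fun F => le_csSup hbdd ⟨F, rfl⟩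
  have hδM : δ ≤ M := csSup_le ⟨‖x ∅‖, ⟨∅, rfl⟩⟩ (by rintro r ⟨F, rfl⟩; exact hxM F)
  have hδ0 : 0 ≤ δ := le_trans (norm_nonneg (x ∅)) (hle ∅)
  -- the key parallelogram estimate
  have key : ∀ F G : Finset ι, F ⊆ G → ‖x G - x F‖^2 ≤ 2*δ^2 - 2*‖x F‖^2 := by
    intro F G hFG
    have hxGF : x G ∈ S F := hSmono F G hFG (hxS G)
    have hmid : (1/2 : ℝ) • x F + (1/2 : ℝ) • x G ∈ S F :=
      (hSconv F) (hxS F) hxGF (by norm_num) (by norm_num) (by norm_num)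
    have h1 : ‖x F‖ ≤ ‖(1/2 : ℝ) • x F + (1/2 : ℝ) • x G‖ := hxmin F _ hmid
    have h2 : (1/2 : ℝ) • x F + (1/2 : ℝ) • x G = (1/2 : ℝ) • (x F + x G) := by
      rw [smul_add]
    have h3 : ‖(1/2 : ℝ) • (x F + x G)‖ = (1/2) * ‖x F + x G‖ := by
      rw [norm_smul]
      norm_num
    have h4 : ‖x F‖ ≤ (1/2) * ‖x F + x G‖ := by
      rw [h2, h3] at h1
      exact h1
    have h5 := parallelogram_law_with_norm ℝ (x G) (x F)
    have h6 : ‖x G + x F‖ = ‖x F + x G‖ := by rw [add_comm]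
    have h7 := hle G
    have h8 := norm_nonneg (x F)
    have h9 := norm_nonneg (x F + x G)
    nlinarith [h5, h4, hle G, norm_nonneg (x G)]
  -- a maximizing sequence of finite sets
  have hseq : ∀ n : ℕ, ∃ F : Finset ι, δ - 1/(n+1) < ‖x F‖ := by
    intro n
    by_contra h
    push_neg at h
    have : δ ≤ δ - 1/(n+1) :=
      csSup_le ⟨‖x ∅‖, ⟨∅, rfl⟩⟩ (by rintro r ⟨F, rfl⟩; exact h F)
    have hpos : (0:ℝ) < 1/(n+1) := by positivity
    linarith
  choose Fn hFn using hseq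
  set C : ℝ := 2*(2*M + 1) with hC
  have hCpos : 0 < C := by positivity
  have hbnd : ∀ (n : ℕ) (G : Finset ι), Fn n ⊆ G → ‖x G - x (Fn n)‖^2 ≤ C/(n+1) := by
    intro n G hG
    have h1 := key (Fn n) G hG
    have h2 := hFn n
    have h3 := hle (Fn n)
    have h4 := hxM (Fn n)
    have h5 := norm_nonneg (x (Fn n))
    have hpos : (0:ℝ) < 1/(n+1) := by positivity
    have h6 : δ^2 - ‖x (Fn n)‖^2 ≤ (1/(n+1)) * (2*M + 1) := by
      nlinarith [hδM, hδ0]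
    have h7 : C/(n+1) = 2 * ((1/(n+1)) * (2*M + 1)) := by
      rw [hC]
      field_simp
    rw [h7]
    linarith
  -- Cauchy sequence
  have hdistbnd : ∀ (N n : ℕ), N ≤ n → dist (x (Fn n)) (x (Fn N)) ^ 2 ≤ 4 * (C/(N+1)) := by
    intro N n hNn
    set G := Fn n ∪ Fn N with hG
    have h1 : ‖x G - x (Fn n)‖^2 ≤ C/(n+1) := hbnd n G Finset.subset_union_left
    have h2 : ‖x G - x (Fn N)‖^2 ≤ C/(N+1) := hbnd N G Finset.subset_union_right
    have h3 : dist (x (Fn n)) (x (Fn N)) ≤ ‖x G - x (Fn n)‖ + ‖x G - x (Fn N)‖ := by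
      rw [dist_eq_norm]
      calc ‖x (Fn n) - x (Fn N)‖ = ‖(x G - x (Fn N)) - (x G - x (Fn n))‖ := by
            congr 1
            abel
        _ ≤ ‖x G - x (Fn N)‖ + ‖x G - x (Fn n)‖ := norm_sub_le _ _
        _ = ‖x G - x (Fn n)‖ + ‖x G - x (Fn N)‖ := by ring
    have h4 : C/(n+1) ≤ C/(N+1) := by
      have hNn' : ((N:ℝ)+1) ≤ (n:ℝ)+1 := by
        have : ((N:ℝ)) ≤ (n:ℝ) := by exact_mod_cast hNn
        linarith
      exact div_le_div_of_nonneg_left hCpos.le (by positivity) hNn'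
    have h5 := norm_nonneg (x G - x (Fn n))
    have h6 := norm_nonneg (x G - x (Fn N))
    have h7 := dist_nonneg (x := x (Fn n)) (y := x (Fn N))
    nlinarith [h1, h2, h3, h4,
      sq_nonneg (‖x G - x (Fn n)‖ - ‖x G - x (Fn N)‖),
      mul_self_le_mul_self h7 h3]
  have hcauchy : CauchySeq (fun n => x (Fn n)) := by
    rw [Metric.cauchySeq_iff']
    intro ε hε
    obtain ⟨N, hN⟩ := exists_nat_gt (4 * C / (ε^2)) 
    refine ⟨N, fun n hn => ?_⟩
    have hN1 : 4 * C / (ε^2) < N + 1 := by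
      push_cast
      linarith
    have h1 : 4 * (C/(N+1)) < ε^2 := by
      rw [div_lt_iff₀ (by positivity : (0:ℝ) < ε^2)] at hN1
      have hpos : (0:ℝ) < (N:ℝ)+1 := by positivity
      have he : 4*(C/((N:ℝ)+1)) = (4*C)/((N:ℝ)+1) := by ring
      rw [he, div_lt_iff₀ hpos]
      nlinarith [hN1]
    have h2 := hdistbnd N n hn
    exact lt_of_sq_lt_sq' _ _ dist_nonneg hε.le (by linarith)
  obtain ⟨u, hu⟩ := cauchySeq_tendsto_of_complete hcauchy
  -- the limit point works
  refine ⟨u, fun i => ?_⟩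
  have hmem : ∀ ε > 0, ‖u - q i‖ < ‖p i‖ + ε := by
    intro ε hε
    -- choose n with C/(n+1) < (ε/2)^2 and dist (x (Fn n)) u < ε/2
    obtain ⟨N₁, hN₁⟩ := exists_nat_gt (C / ((ε/2)^2))
    have hN₁' : ∀ n ≥ N₁, C/(n+1) < (ε/2)^2 := by
      intro n hn
      have hpos : (0:ℝ) < (n:ℝ)+1 := by positivity
      rw [div_lt_iff₀ hpos]
      have : C / ((ε/2)^2) < (n:ℝ)+1 := by
        calc C / ((ε/2)^2) < N₁ := hN₁
          _ ≤ n := by exact_mod_cast hn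
          _ < n + 1 := by linarith
      rw [div_lt_iff₀ (by positivity : (0:ℝ) < (ε/2)^2)] at this
      nlinarith [this]
    have htend := Metric.tendsto_atTop.1 hu (ε/2) (by positivity)
    obtain ⟨N₂, hN₂⟩ := htend
    set n := max N₁ N₂ with hn
    set G := insert i (Fn n) with hG
    have h1 : ‖x G - x (Fn n)‖^2 ≤ C/(n+1) := hbnd n G (Finset.subset_insert i _)
    have h2 : C/(n+1) < (ε/2)^2 := hN₁' n (le_max_left _ _)
    have h3 : ‖x G - x (Fn n)‖ < ε/2 :=
      lt_of_sq_lt_sq' _ _ (norm_nonneg _) (by positivity) (by linarith)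
    have h4 : dist (x (Fn n)) u < ε/2 := hN₂ n (le_max_right _ _)
    have h5 : ‖x G - q i‖ ≤ ‖p i‖ := hxS G i (Finset.mem_insert_self _ _)
    calc ‖u - q i‖ = ‖(u - x (Fn n)) + (x (Fn n) - x G) + (x G - q i)‖ := by
          congr 1
          abel
      _ ≤ ‖(u - x (Fn n)) + (x (Fn n) - x G)‖ + ‖x G - q i‖ := norm_add_le _ _
      _ ≤ ‖u - x (Fn n)‖ + ‖x (Fn n) - x G‖ + ‖x G - q i‖ := by
          linarith [norm_add_le (u - x (Fn n)) (x (Fn n) - x G)]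
      _ < ε/2 + ε/2 + ‖p i‖ := by
          have e1 : ‖u - x (Fn n)‖ = dist (x (Fn n)) u := by
            rw [dist_eq_norm, norm_sub_rev]
          have e2 : ‖x (Fn n) - x G‖ = ‖x G - x (Fn n)‖ := norm_sub_rev _ _
          rw [e1, e2]
          linarith
      _ = ‖p i‖ + ε := by ring
  by_contra hcon
  push_neg at hcon
  have := hmem ((‖u - q i‖ - ‖p i‖)/2) (by linarith)
  linarith

lemma inner_sub_neg_add_eq (α β : H) : ⟪α - β, -(α + β)⟫ = ‖β‖^2 - ‖α‖^2 := by
  rw [inner_neg_right, inner_add_right, inner_sub_left, inner_sub_left,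
    real_inner_comm β α, real_inner_self_eq_norm_sq, real_inner_self_eq_norm_sq]
  ring

/-- A set-valued operator `A : H ⇉ H`, given by its graph, is monotone. -/
def MonotoneGraph (A : Set (H × H)) : Prop :=
  ∀ a ∈ A, ∀ b ∈ A, (0 : ℝ) ≤ ⟪a.1 - b.1, a.2 - b.2⟫

/-- Maximal monotonicity: monotone with no proper monotone extension. -/
def MaximallyMonotoneGraph (A : Set (H × H)) : Prop :=
  MonotoneGraph A ∧ ∀ p : H × H, (∀ b ∈ A, (0 : ℝ) ≤ ⟪p.1 - b.1, p.2 - b.2⟫) → p ∈ A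

/-- Minty's theorem: a monotone operator `A` on a Hilbert space is maximally monotone
if and only if `ran (A + Id) = H`. -/
theorem minty_surjectivity (A : Set (H × H)) (hA : MonotoneGraph A) :
    MaximallyMonotoneGraph A ↔ ∀ z : H, ∃ w ∈ A, w.1 + w.2 = z := by
  constructor
  · rintro ⟨hmono, hmax⟩ z
    -- A is nonempty
    have hAne : A.Nonempty := by
      by_contra h
      rw [Set.not_nonempty_iff_eq_empty] at h
      have h0 : ((0:H), (0:H)) ∈ A := by
        apply hmax
        intro b hb
        rw [h] at hb
        exact absurd hb (Set.notMem_empty b)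
      rw [h] at h0
      exact Set.notMem_empty _ h0
    haveI : Nonempty ↥A := hAne.to_subtype
    set p : ↥A → H := fun b => (2⁻¹:ℝ) • ((b:H×H).1 + (b:H×H).2 - z) with hp
    set q : ↥A → H := fun b => (2⁻¹:ℝ) • ((b:H×H).1 - (b:H×H).2) with hq
    have hpq : ∀ i j, ‖q i - q j‖ ≤ ‖p i - p j‖ := by
      intro i j
      have hm : (0:ℝ) ≤ ⟪(i:H×H).1 - (j:H×H).1, (i:H×H).2 - (j:H×H).2⟫ :=
        hA i i.2 j j.2
      set a : H := (i:H×H).1 - (j:H×H).1 with ha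
      set d : H := (i:H×H).2 - (j:H×H).2 with hd
      have e1 : q i - q j = (2⁻¹:ℝ) • (a - d) := by
        rw [hq, ha, hd]
        simp only
        module
      have e2 : p i - p j = (2⁻¹:ℝ) • (a + d) := by
        rw [hp, ha, hd]
        simp only
        module
      rw [e1, e2, norm_smul, norm_smul]
      have h3 : ‖a - d‖ ≤ ‖a + d‖ := by
        apply le_of_pow_le_pow_left₀ two_ne_zero (norm_nonneg _)
        rw [@norm_sub_sq_real, @norm_add_sq_real]
        linarith
      have : (0:ℝ) ≤ ‖(2⁻¹:ℝ)‖ := norm_nonneg _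
      exact mul_le_mul_of_nonneg_left h3 this
    obtain ⟨u, hu⟩ := kirszbraun_point p q hpq
    set x : H := u + (2⁻¹:ℝ) • z with hx
    have hrel : ∀ b ∈ A, (0:ℝ) ≤ ⟪(x, z - x).1 - b.1, (x, z - x).2 - b.2⟫ := by
      intro b hb
      set i : ↥A := ⟨b, hb⟩ with hi
      set α : H := u - q i with hα
      set β : H := p i with hβ
      have hαβ : ‖α‖ ≤ ‖β‖ := hu i
      have e1 : (x, z - x).1 - b.1 = α - β := by
        rw [hα, hβ, hq, hp, hx, hi]
        simp only
        module
      have e2 : (x, z - x).2 - b.2 = -(α + β) := by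
        rw [hα, hβ, hq, hp, hx, hi]
        simp only
        module
      rw [e1, e2, inner_sub_neg_add_eq]
      have h4 : ‖α‖^2 ≤ ‖β‖^2 := pow_le_pow_left₀ (norm_nonneg _) hαβ 2
      linarith
    have hmem := hmax (x, z - x) hrel
    exact ⟨(x, z - x), hmem, by simp⟩
  · intro hsurj
    refine ⟨hA, ?_⟩
    rintro ⟨x, u⟩ hp
    obtain ⟨⟨y, v⟩, hyv, hsum⟩ := hsurj (x + u)
    simp only at hsum
    have h0 : (0:ℝ) ≤ ⟪x - y, u - v⟫ := hp (y, v) hyv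
    have he : u - v = -(x - y) := by
      have h1 : u - v - (-(x - y)) = (x + u) - (y + v) := by abel
      have h2 : (x + u) - (y + v) = 0 := sub_eq_zero.2 hsum.symm
      exact sub_eq_zero.1 (h1.trans h2)
    rw [he, inner_neg_right] at h0
    have h3 : ⟪x - y, x - y⟫ = (0:ℝ) :=
      le_antisymm (by linarith) real_inner_self_nonneg
    have h4 : x = y := sub_eq_zero.1 (inner_self_eq_zero.1 h3)
    have h5 : u = v := by
      rw [h4] at hsum
      exact (add_left_cancel hsum.symm)
    rw [h4, h5]
    exact hyv
end
end

section
/- (Moreau decomposition) Let f : H → ℝ∪{+∞} be a proper lower semicontinuous convex function on a real Hilbert space H. Then for every x ∈ H, x = prox_f(x) + prox_{f*}(x). -/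
noncomputable section
open scoped RealInnerProductSpace

variable {H : Type*} [NormedAddCommGroup H] [InnerProductSpace ℝ H] [CompleteSpace H]

/-- Convexity for extended-real-valued functions. -/
def ERealConvexOn (f : H → EReal) : Prop :=
  ∀ x y : H, ∀ a b : ℝ, 0 ≤ a → 0 ≤ b → a + b = 1 →
    f (a • x + b • y) ≤ (a : EReal) * f x + (b : EReal) * f y

/-- `u` is the proximal point of `f` at `x`: it minimizes `y ↦ f(y) + ‖x − y‖²/2`. -/
def IsProx (f : H → EReal) (x u : H) : Prop :=
  ∀ y : H, f u + ((‖x - u‖ ^ 2 / 2 : ℝ) : EReal) ≤ f y + ((‖x - y‖ ^ 2 / 2 : ℝ) : EReal)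

/-- The Fenchel conjugate of `f`, identified as a function on `H` via the Riesz
isomorphism: `f*(v) = sup_y (⟪v, y⟫ − f(y))`. -/
def rieszConj (f : H → EReal) (v : H) : EReal :=
  ⨆ y : H, ((⟪v, y⟫ : EReal) - f y)

open Filter Topology

/-- A proper lsc convex function has a continuous affine minorant. -/
lemma exists_affine_minorant (f : H → EReal) (hbot : ∀ x, f x ≠ ⊥)
    (hproper : ∃ x, f x ≠ ⊤) (hconv : ERealConvexOn f) (hlsc : LowerSemicontinuous f) :
    ∃ (g : H →L[ℝ] ℝ) (β : ℝ), ∀ y, ((g y + β : ℝ) : EReal) ≤ f y := by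
  obtain ⟨x0, hx0⟩ := hproper
  set r0 := (f x0).toReal with hr0
  have hfx0 : f x0 = (r0 : EReal) := (EReal.coe_toReal hx0 (hbot x0)).symm
  set t : Set (H × ℝ) := {p | f p.1 ≤ ((p.2 : ℝ) : EReal)} with ht
  have hclosed : IsClosed t := by
    have h1 : IsClosed {p : H × EReal | f p.1 ≤ p.2} := hlsc.isClosed_epigraph
    have h2 : Continuous (fun p : H × ℝ => ((p.1, (p.2 : EReal)) : H × EReal)) :=
      continuous_fst.prodMk (continuous_coe_real_ereal.comp continuous_snd)
    exact h1.preimage h2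
  have hconvt : Convex ℝ t := by
    rintro ⟨y, s⟩ hy ⟨z, s'⟩ hz a b ha hb hab
    simp only [ht, Set.mem_setOf_eq] at hy hz ⊢
    have hyt : f y ≠ ⊤ := (hy.trans_lt (EReal.coe_lt_top s)).ne
    have hzt : f z ≠ ⊤ := (hz.trans_lt (EReal.coe_lt_top s')).ne
    have hyr : f y = ((f y).toReal : EReal) := (EReal.coe_toReal hyt (hbot y)).symm
    have hzr : f z = ((f z).toReal : EReal) := (EReal.coe_toReal hzt (hbot z)).symm
    have h1 : f (a • y + b • z) ≤ (a : EReal) * f y + (b : EReal) * f z :=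
      hconv y z a b ha hb hab
    have h2 : (a : EReal) * f y + (b : EReal) * f z
        = ((a * (f y).toReal + b * (f z).toReal : ℝ) : EReal) := by
      rw [hyr, hzr]; norm_cast
    have h3 : (a * (f y).toReal + b * (f z).toReal : ℝ) ≤ a * s + b * s' := by
      have := EReal.toReal_le_toReal hy (hbot y) (EReal.coe_ne_top s)
      have := EReal.toReal_le_toReal hz (hbot z) (EReal.coe_ne_top s')
      simp only [EReal.toReal_coe] at *
      nlinarith
    refine le_trans (h1.trans_eq h2) ?_
    exact_mod_cast EReal.coe_le_coe_iff.2 h3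
  have hnotmem : ((x0, r0 - 1) : H × ℝ) ∉ t := by
    simp only [ht, Set.mem_setOf_eq, hfx0, EReal.coe_le_coe_iff, not_le]
    linarith
  obtain ⟨L, α, hα1, hα2⟩ := geometric_hahn_banach_point_closed hconvt hclosed hnotmem
  set c := L ((0 : H), (1 : ℝ)) with hc
  have hL : ∀ (y : H) (s : ℝ), L (y, s) = L (y, 0) + s * c := by
    intro y s
    have : ((y, s) : H × ℝ) = (y, 0) + s • ((0 : H), (1 : ℝ)) := by
      simp [Prod.ext_iff]
    rw [this, map_add, map_smul, smul_eq_mul]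
  have hmem0 : ((x0, r0) : H × ℝ) ∈ t := by
    simp [ht, Set.mem_setOf_eq, hfx0]
  have h1 : α < L (x0, 0) + r0 * c := by rw [← hL]; exact hα2 _ hmem0
  have h2 : L (x0, 0) + (r0 - 1) * c < α := by rw [← hL]; exact hα1
  have hcpos : 0 < c := by nlinarith
  refine ⟨(-(c⁻¹)) • (L.comp (ContinuousLinearMap.inl ℝ H ℝ)), α / c, ?_⟩
  intro y
  rcases eq_or_ne (f y) ⊤ with h | h
  · rw [h]; exact le_top
  · have hyr : f y = ((f y).toReal : EReal) := (EReal.coe_toReal h (hbot y)).symm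
    set ry := (f y).toReal with hry
    have hmem : ((y, ry) : H × ℝ) ∈ t := by
      simp only [ht, Set.mem_setOf_eq]; rw [hyr]
    have h3 : α < L (y, 0) + ry * c := by rw [← hL]; exact hα2 _ hmem
    have h4 : (-(c⁻¹)) * L (y, 0) + α / c ≤ ry := by
      rw [div_eq_mul_inv]
      have hci : 0 < c⁻¹ := inv_pos.2 hcpos
      have := mul_lt_mul_of_pos_right h3 hci
      rw [add_mul, mul_assoc, mul_inv_cancel₀ hcpos.ne', mul_one] at this
      linarith
    have h5 : ((-(c⁻¹)) • (L.comp (ContinuousLinearMap.inl ℝ H ℝ))) y = (-(c⁻¹)) * L (y, 0) := by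
      simp [ContinuousLinearMap.smul_apply, ContinuousLinearMap.comp_apply]
    rw [hyr, h5]
    exact_mod_cast EReal.coe_le_coe_iff.2 (by linarith)


set_option linter.unusedSectionVars false

lemma midpoint_norm_sq (x a b : H) :
    ‖x - ((1/2 : ℝ) • a + (1/2 : ℝ) • b)‖ ^ 2
      = (‖x - a‖ ^ 2 + ‖x - b‖ ^ 2) / 2 - ‖a - b‖ ^ 2 / 4 := by
  have h := parallelogram_law_with_norm ℝ (x - a) (x - b)
  have h1 : x - ((1/2 : ℝ) • a + (1/2 : ℝ) • b) = (1/2 : ℝ) • ((x - a) + (x - b)) := by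
    rw [smul_add, smul_sub, smul_sub]
    have : x = (1/2 : ℝ) • x + (1/2 : ℝ) • x := by
      rw [← add_smul]; norm_num
    rw [sub_add_eq_sub_sub]
    nth_rw 1 [this]
    abel
  have h2 : (x - a) - (x - b) = b - a := by abel
  have h3 : ‖x - ((1/2 : ℝ) • a + (1/2 : ℝ) • b)‖ = ‖(x - a) + (x - b)‖ / 2 := by
    rw [h1, norm_smul]; simp; ring
  have h4 : ‖a - b‖ = ‖b - a‖ := norm_sub_rev a b
  rw [h2] at h
  rw [h3, h4]
  nlinarith [h]

lemma exists_isProx (f : H → EReal) (hbot : ∀ x, f x ≠ ⊥)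
    (hproper : ∃ x, f x ≠ ⊤) (hconv : ERealConvexOn f) (hlsc : LowerSemicontinuous f)
    (x : H) : ∃ u, IsProx f x u := by
  obtain ⟨g, β, hg⟩ := exists_affine_minorant f hbot hproper hconv hlsc
  set φ : H → EReal := fun y => f y + ((‖x - y‖ ^ 2 / 2 : ℝ) : EReal) with hφ
  set C : ℝ := β - ‖g‖ * ‖x‖ - ‖g‖ ^ 2 / 2 with hC
  have hlow : ∀ y, ((C : ℝ) : EReal) ≤ φ y := by
    intro y
    have h1 : ((g y + β : ℝ) : EReal) ≤ f y := hg y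
    have hb1 : |g y| ≤ ‖g‖ * ‖y‖ := by
      have := g.le_opNorm y; simpa using this
    have hb2 : ‖y‖ ≤ ‖x‖ + ‖x - y‖ := by
      calc ‖y‖ = ‖x - (x - y)‖ := by rw [sub_sub_cancel]
        _ ≤ ‖x‖ + ‖x - y‖ := norm_sub_le _ _
    have hb3 : (0:ℝ) ≤ ‖g‖ := norm_nonneg _
    have h2 : C ≤ g y + β + ‖x - y‖ ^ 2 / 2 := by
      have habs : -(‖g‖ * ‖y‖) ≤ g y := neg_le_of_abs_le hb1
      nlinarith [sq_nonneg (‖x - y‖ - ‖g‖), norm_nonneg (x - y)]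
    calc ((C : ℝ) : EReal) ≤ ((g y + β + ‖x - y‖ ^ 2 / 2 : ℝ) : EReal) := by
          exact_mod_cast h2
      _ = ((g y + β : ℝ) : EReal) + ((‖x - y‖ ^ 2 / 2 : ℝ) : EReal) := by norm_cast
      _ ≤ φ y := add_le_add_left h1 _
  set m : EReal := ⨅ y, φ y with hm
  have hmC : ((C : ℝ) : EReal) ≤ m := le_iInf hlow
  obtain ⟨x0, hx0⟩ := hproper
  have hfx0 : f x0 = (((f x0).toReal : ℝ) : EReal) := (EReal.coe_toReal hx0 (hbot x0)).symm
  have hmtop : m ≠ ⊤ := by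
    have h1 : m ≤ φ x0 := iInf_le _ x0
    have h2 : φ x0 = (((f x0).toReal + ‖x - x0‖ ^ 2 / 2 : ℝ) : EReal) := by
      show f x0 + _ = _
      rw [hfx0]; norm_cast
    rw [h2] at h1
    exact (h1.trans_lt (EReal.coe_lt_top _)).ne
  have hmbot : m ≠ ⊥ := ((EReal.bot_lt_coe C).trans_le hmC).ne'  -- check name
  set mr : ℝ := m.toReal with hmr
  have hmeq : m = ((mr : ℝ) : EReal) := (EReal.coe_toReal hmtop hmbot).symm
  -- minimizing sequence
  have hseq : ∀ n : ℕ, ∃ y, φ y < m + ((1 / ((n:ℝ) + 1) : ℝ) : EReal) := by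
    intro n
    have hlt : m < m + ((1 / ((n:ℝ) + 1) : ℝ) : EReal) := by
      rw [hmeq]
      have : ((mr : ℝ) : EReal) + ((1 / ((n:ℝ) + 1) : ℝ) : EReal)
          = ((mr + 1 / ((n:ℝ)+1) : ℝ) : EReal) := by norm_cast
      rw [this]
      have hp : (0:ℝ) < 1 / ((n:ℝ) + 1) := by positivity
      exact_mod_cast EReal.coe_lt_coe_iff.2 (by push_cast; linarith)
    exact iInf_lt_iff.1 (hm ▸ hlt)
  choose y hy using hseq
  have hytop : ∀ n, f (y n) ≠ ⊤ := by
    intro n hn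
    have : φ (y n) = ⊤ := by
      show f (y n) + _ = ⊤
      rw [hn]; exact EReal.top_add_coe _
    have h1 := hy n
    rw [this] at h1
    have h2 := h1.trans_le le_top
    exact absurd h2 (lt_irrefl _)
  set fn : ℕ → ℝ := fun n => (f (y n)).toReal with hfn
  have hfneq : ∀ n, f (y n) = ((fn n : ℝ) : EReal) := fun n =>
    (EReal.coe_toReal (hytop n) (hbot (y n))).symm
  have hφeq : ∀ n, φ (y n) = ((fn n + ‖x - y n‖ ^ 2 / 2 : ℝ) : EReal) := by
    intro n; show f (y n) + _ = _; rw [hfneq n]; norm_cast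
  have hup : ∀ n, fn n + ‖x - y n‖ ^ 2 / 2 < mr + 1 / ((n:ℝ) + 1) := by
    intro n
    have := hy n
    rw [hφeq n, hmeq] at this
    have h2 : ((mr : ℝ) : EReal) + ((1 / ((n:ℝ) + 1) : ℝ) : EReal)
        = ((mr + 1 / ((n:ℝ)+1) : ℝ) : EReal) := by norm_cast
    rw [h2] at this
    exact_mod_cast this
  have hlo : ∀ n, mr ≤ fn n + ‖x - y n‖ ^ 2 / 2 := by
    intro n
    have h1 : m ≤ φ (y n) := iInf_le _ _
    rw [hφeq n, hmeq] at h1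
    exact_mod_cast h1
  -- midpoint estimate
  have hmid : ∀ n k : ℕ, ‖y n - y k‖ ^ 2 < 4 * (1 / ((n:ℝ)+1) + 1 / ((k:ℝ)+1)) := by
    intro n k
    set z : H := (1/2 : ℝ) • y n + (1/2 : ℝ) • y k with hz
    have h1 : f z ≤ (((fn n + fn k) / 2 : ℝ) : EReal) := by
      have := hconv (y n) (y k) (1/2) (1/2) (by norm_num) (by norm_num) (by norm_num)
      rw [hfneq n, hfneq k] at this
      calc f z ≤ ((1/2 : ℝ) : EReal) * ((fn n : ℝ) : EReal)
            + ((1/2 : ℝ) : EReal) * ((fn k : ℝ) : EReal) := this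
        _ = (((fn n + fn k) / 2 : ℝ) : EReal) := by norm_cast; ring
    have h2 : m ≤ φ z := iInf_le _ _
    have h3 : φ z ≤ (((fn n + fn k) / 2 + ‖x - z‖ ^ 2 / 2 : ℝ) : EReal) := by
      show f z + _ ≤ _
      calc f z + ((‖x - z‖ ^ 2 / 2 : ℝ) : EReal)
          ≤ (((fn n + fn k) / 2 : ℝ) : EReal) + ((‖x - z‖ ^ 2 / 2 : ℝ) : EReal) :=
            add_le_add_left h1 _
        _ = _ := by norm_cast
    have h4 : mr ≤ (fn n + fn k) / 2 + ‖x - z‖ ^ 2 / 2 := by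
      have := h2.trans h3
      rw [hmeq] at this
      exact_mod_cast this
    have h5 : ‖x - z‖ ^ 2 = (‖x - y n‖ ^ 2 + ‖x - y k‖ ^ 2) / 2 - ‖y n - y k‖ ^ 2 / 4 :=
      midpoint_norm_sq x (y n) (y k)
    have h6 := hup n
    have h7 := hup k
    nlinarith [h4, h5]
  -- Cauchy
  have hcauchy : CauchySeq y := by
    rw [Metric.cauchySeq_iff]
    intro ε hε
    obtain ⟨N, hN⟩ := exists_nat_gt (8 / ε ^ 2)
    have hN0 : (0:ℝ) < N := lt_of_le_of_lt (by positivity) hN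
    refine ⟨N, fun n hn k hk => ?_⟩
    have h1 := hmid n k
    have h2 : 1 / ((n:ℝ)+1) ≤ 1 / ((N:ℝ)+1) := by
      apply one_div_le_one_div_of_le (by positivity)
      have : (N:ℝ) ≤ (n:ℝ) := Nat.cast_le.2 hn
      linarith
    have h3 : 1 / ((k:ℝ)+1) ≤ 1 / ((N:ℝ)+1) := by
      apply one_div_le_one_div_of_le (by positivity)
      have : (N:ℝ) ≤ (k:ℝ) := Nat.cast_le.2 hk
      linarith
    have h4 : 8 / ((N:ℝ)+1) < ε ^ 2 := by
      rw [div_lt_iff₀ (by positivity)]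
      rw [div_lt_iff₀ (by positivity)] at hN
      nlinarith [sq_nonneg ε, hε]
    have h5 : ‖y n - y k‖ ^ 2 < ε ^ 2 := by
      have h23 : 4 * (1 / ((n:ℝ)+1) + 1 / ((k:ℝ)+1)) ≤ 8 * (1 / ((N:ℝ)+1)) := by linarith
      have h8 : 8 * (1 / ((N:ℝ)+1)) = 8 / ((N:ℝ)+1) := by ring
      linarith
    rw [dist_eq_norm]
    nlinarith [norm_nonneg (y n - y k), hε]
  obtain ⟨u, hu⟩ := cauchySeq_tendsto_of_complete hcauchy
  -- φ u ≤ m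
  have hφu : φ u ≤ m := by
    by_contra hlt
    rw [not_le] at hlt
    obtain ⟨s, hs1, hs2⟩ := EReal.exists_between_coe_real hlt
    have hmrs : mr < s := by
      rw [hmeq] at hs1; exact_mod_cast hs1
    set r : ℝ := ‖x - u‖ ^ 2 / 2 with hr
    set η : ℝ := (s - mr) / 4 with hη
    have hηpos : 0 < η := by rw [hη]; linarith
    have hfu : ((s - r - η : ℝ) : EReal) < f u := by
      by_contra hle
      rw [not_lt] at hle
      have h1 : φ u ≤ ((s - η : ℝ) : EReal) := by
        show f u + _ ≤ _
        calc f u + ((r : ℝ) : EReal) ≤ ((s - r - η : ℝ) : EReal) + ((r : ℝ) : EReal) :=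
              add_le_add_left hle _
          _ = ((s - η : ℝ) : EReal) := by norm_cast; ring
      have h2 : ((s:ℝ) : EReal) < ((s - η : ℝ) : EReal) := hs2.trans_le h1
      have := EReal.coe_lt_coe_iff.1 h2
      linarith
    have hev1 : ∀ᶠ z in 𝓝 u, ((s - r - η : ℝ) : EReal) < f z := hlsc u _ hfu
    have hcont : Continuous (fun z : H => ‖x - z‖ ^ 2 / 2) := by
      fun_prop
    have hev2 : ∀ᶠ z in 𝓝 u, r - η < ‖x - z‖ ^ 2 / 2 := by
      have : Tendsto (fun z : H => ‖x - z‖ ^ 2 / 2) (𝓝 u) (𝓝 r) := hcont.tendsto u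
      exact this (eventually_gt_nhds (by linarith))
    have hev3 : ∀ᶠ n in atTop, ((s - r - η : ℝ) : EReal) < f (y n) ∧ r - η < ‖x - y n‖ ^ 2 / 2 :=
      hu.eventually (hev1.and hev2)
    have hev4 : ∀ᶠ n : ℕ in atTop, 1 / ((n:ℝ)+1) < η :=
      tendsto_one_div_add_atTop_nhds_zero_nat (eventually_lt_nhds hηpos)
    obtain ⟨n, hn1, hn2⟩ := (hev3.and hev4).exists
    have hfnn : s - r - η < fn n := by
      have := hn1.1
      rw [hfneq n] at this
      exact_mod_cast this
    have := hup n
    have := hn1.2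
    have := hn2
    rw [hη] at *
    linarith [hup n, hn1.2, hn2, hfnn]
  refine ⟨u, fun z => ?_⟩
  have h1 : m ≤ φ z := iInf_le _ _
  exact (hφu.trans h1)

lemma isProx_conj (f : H → EReal) (hbot : ∀ x, f x ≠ ⊥) (hproper : ∃ x, f x ≠ ⊤)
    (hconv : ERealConvexOn f) (x u : H) (hu : IsProx f x u) :
    IsProx (rieszConj f) x (x - u) := by
  obtain ⟨x0, hx0⟩ := hproper
  have hfx0 : f x0 = (((f x0).toReal : ℝ) : EReal) := (EReal.coe_toReal hx0 (hbot x0)).symm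
  have hutop : f u ≠ ⊤ := by
    intro h
    have h1 := hu x0
    rw [h, EReal.top_add_coe, hfx0] at h1
    have h2 : (((f x0).toReal + ‖x - x0‖ ^ 2 / 2 : ℝ) : EReal) = ((((f x0).toReal : ℝ) : EReal)
        + ((‖x - x0‖ ^ 2 / 2 : ℝ) : EReal)) := by norm_cast
    rw [← h2, top_le_iff] at h1
    exact EReal.coe_ne_top _ h1
  set fu : ℝ := (f u).toReal with hfu
  have hfueq : f u = ((fu : ℝ) : EReal) := (EReal.coe_toReal hutop (hbot u)).symm
  -- subgradient inequality
  have hsub : ∀ z, f u + ((⟪x - u, z - u⟫ : ℝ) : EReal) ≤ f z := by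
    intro z
    rcases eq_or_ne (f z) ⊤ with h | h
    · rw [h]; exact le_top
    set fz : ℝ := (f z).toReal with hfz
    have hfzeq : f z = ((fz : ℝ) : EReal) := (EReal.coe_toReal h (hbot z)).symm
    have key : ∀ t : ℝ, 0 < t → t ≤ 1 →
        fu + ⟪x - u, z - u⟫ ≤ fz + t * (‖z - u‖ ^ 2 / 2) := by
      intro t ht ht1
      set p : H := (1 - t) • u + t • z with hp
      have hpf : f p ≤ (((1 - t) * fu + t * fz : ℝ) : EReal) := by
        have h0 := hconv u z (1 - t) t (by linarith) ht.le (by ring)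
        rw [hfueq, hfzeq] at h0
        calc f p ≤ ((1 - t : ℝ) : EReal) * ((fu : ℝ) : EReal) + ((t : ℝ) : EReal)
              * ((fz : ℝ) : EReal) := h0
          _ = (((1 - t) * fu + t * fz : ℝ) : EReal) := by norm_cast
      have hprox := hu p
      have hxp : x - p = (x - u) - t • (z - u) := by
        rw [hp, sub_smul, one_smul, smul_sub]; abel
      have hBex : ‖x - p‖ ^ 2 = ‖x - u‖ ^ 2 - 2 * t * ⟪x - u, z - u⟫ + t ^ 2 * ‖z - u‖ ^ 2 := by
        rw [hxp, norm_sub_sq_real, real_inner_smul_right, norm_smul, Real.norm_eq_abs,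
          abs_of_pos ht, mul_pow]
        ring
      have hchain : ((fu + ‖x - u‖ ^ 2 / 2 : ℝ) : EReal)
          ≤ (((1 - t) * fu + t * fz + ‖x - p‖ ^ 2 / 2 : ℝ) : EReal) := by
        calc ((fu + ‖x - u‖ ^ 2 / 2 : ℝ) : EReal)
            = f u + ((‖x - u‖ ^ 2 / 2 : ℝ) : EReal) := by rw [hfueq]; norm_cast
          _ ≤ f p + ((‖x - p‖ ^ 2 / 2 : ℝ) : EReal) := hprox
          _ ≤ (((1 - t) * fu + t * fz : ℝ) : EReal) + ((‖x - p‖ ^ 2 / 2 : ℝ) : EReal) :=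
              add_le_add_left hpf _
          _ = _ := by norm_cast
      have hre : fu + ‖x - u‖ ^ 2 / 2 ≤ (1 - t) * fu + t * fz + ‖x - p‖ ^ 2 / 2 := by
        exact_mod_cast hchain
      rw [hBex] at hre
      have h2 : t * (fu + ⟪x - u, z - u⟫) ≤ t * (fz + t * (‖z - u‖ ^ 2 / 2)) := by nlinarith
      exact le_of_mul_le_mul_left h2 ht
    have hfinal : fu + ⟪x - u, z - u⟫ ≤ fz := by
      by_contra hlt
      push_neg at hlt
      set c : ℝ := ‖z - u‖ ^ 2 / 2 with hc
      have hc0 : 0 ≤ c := by positivity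
      set t : ℝ := min 1 ((fu + ⟪x - u, z - u⟫ - fz) / (c + 1)) with htdef
      have htpos : 0 < t := lt_min one_pos (by
        apply div_pos (by linarith) (by linarith))
      have ht1 : t ≤ 1 := min_le_left _ _
      have hkey := key t htpos ht1
      have h2 : t * c ≤ ((fu + ⟪x - u, z - u⟫ - fz) / (c + 1)) * c :=
        mul_le_mul_of_nonneg_right (min_le_right _ _) hc0
      have h3 : ((fu + ⟪x - u, z - u⟫ - fz) / (c + 1)) * c < fu + ⟪x - u, z - u⟫ - fz := by
        rw [div_mul_eq_mul_div, div_lt_iff₀ (by linarith)]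
        nlinarith
      linarith
    rw [hfueq, hfzeq]
    calc ((fu : ℝ) : EReal) + ((⟪x - u, z - u⟫ : ℝ) : EReal)
        = ((fu + ⟪x - u, z - u⟫ : ℝ) : EReal) := by norm_cast
      _ ≤ ((fz : ℝ) : EReal) := by exact_mod_cast hfinal
  -- value of the conjugate at v = x - u
  have hconjv : rieszConj f (x - u) = ((⟪x - u, u⟫ - fu : ℝ) : EReal) := by
    apply le_antisymm
    · apply iSup_le
      intro z
      rcases eq_or_ne (f z) ⊤ with h | h
      · rw [h, EReal.sub_top]; exact bot_le
      · have hfzeq : f z = (((f z).toReal : ℝ) : EReal) := (EReal.coe_toReal h (hbot z)).symm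
        have hre : fu + ⟪x - u, z - u⟫ ≤ (f z).toReal := by
          have h1 := hsub z
          rw [hfueq, hfzeq] at h1
          exact_mod_cast h1
        rw [inner_sub_right] at hre
        rw [hfzeq]
        calc ((⟪x - u, z⟫ : ℝ) : EReal) - (((f z).toReal : ℝ) : EReal)
            = ((⟪x - u, z⟫ - (f z).toReal : ℝ) : EReal) := by norm_cast
          _ ≤ ((⟪x - u, u⟫ - fu : ℝ) : EReal) := by
              exact_mod_cast EReal.coe_le_coe_iff.2 (by linarith)
    · have h1 : ((⟪x - u, u⟫ - fu : ℝ) : EReal) = ((⟪x - u, u⟫ : ℝ) : EReal) - f u := by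
        rw [hfueq]; norm_cast
      rw [h1]
      exact le_iSup (fun z => ((⟪x - u, z⟫ : ℝ) : EReal) - f z) u
  intro w
  rw [hconjv, sub_sub_cancel]
  rcases eq_or_ne (rieszConj f w) ⊤ with h | h
  · rw [h, EReal.top_add_coe]
    exact le_top
  · have hwlo : ((⟪w, u⟫ - fu : ℝ) : EReal) ≤ rieszConj f w := by
      have h1 : ((⟪w, u⟫ - fu : ℝ) : EReal) = ((⟪w, u⟫ : ℝ) : EReal) - f u := by
        rw [hfueq]; norm_cast
      rw [h1]
      exact le_iSup (fun z => ((⟪w, z⟫ : ℝ) : EReal) - f z) u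
    have hwbot : rieszConj f w ≠ ⊥ := ((EReal.bot_lt_coe _).trans_le hwlo).ne'
    have hweq : rieszConj f w = (((rieszConj f w).toReal : ℝ) : EReal) :=
      (EReal.coe_toReal h hwbot).symm
    set rw' : ℝ := (rieszConj f w).toReal with hrw
    have hwre : ⟪w, u⟫ - fu ≤ rw' := by
      rw [hweq] at hwlo
      exact_mod_cast hwlo
    have hinner : ⟪x - u, u⟫ = ⟪x - w, u⟫ + ⟪w, u⟫ - ‖u‖ ^ 2 := by
      simp only [inner_sub_left, real_inner_self_eq_norm_sq]
      ring
    have hkey2 : ⟪x - w, u⟫ ≤ ‖x - w‖ ^ 2 / 2 + ‖u‖ ^ 2 / 2 := by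
      nlinarith [real_inner_le_norm (x - w) u, sq_nonneg (‖x - w‖ - ‖u‖)]
    have hfin : ⟪x - u, u⟫ - fu + ‖u‖ ^ 2 / 2 ≤ rw' + ‖x - w‖ ^ 2 / 2 := by
      rw [hinner]; linarith
    rw [hweq]
    calc ((⟪x - u, u⟫ - fu : ℝ) : EReal) + ((‖u‖ ^ 2 / 2 : ℝ) : EReal)
        = ((⟪x - u, u⟫ - fu + ‖u‖ ^ 2 / 2 : ℝ) : EReal) := by norm_cast
      _ ≤ ((rw' + ‖x - w‖ ^ 2 / 2 : ℝ) : EReal) := by exact_mod_cast hfin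
      _ = ((rw' : ℝ) : EReal) + ((‖x - w‖ ^ 2 / 2 : ℝ) : EReal) := by norm_cast

/-- Moreau decomposition: for a proper lower semicontinuous convex function `f` on a
Hilbert space, `x = prox_f(x) + prox_{f*}(x)` for every `x`. -/
theorem moreau_decomposition (f : H → EReal) (hbot : ∀ x, f x ≠ ⊥)
    (hproper : ∃ x, f x ≠ ⊤) (hconv : ERealConvexOn f) (hlsc : LowerSemicontinuous f) :
    ∀ x : H, ∃ u v : H, IsProx f x u ∧ IsProx (rieszConj f) x v ∧ u + v = x := by
  intro x
  obtain ⟨u, hu⟩ := exists_isProx f hbot hproper hconv hlsc x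
  exact ⟨u, x - u, hu, isProx_conj f hbot hproper hconv x u hu, by abel⟩
end
end
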